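/- arXiv:2107.05454 — 2 statements merged into one kernel-verified Lean document; each statement's English description precedes it below -/
import Mathlib

section
/- Every maximal planar graph of minimum degree 5 contains either two adjacent vertices of degree 5, or a vertex of degree 5 adjacent to a vertex of degree 6 (Wernicke's theorem). -/
open Finset

lemma wernicke_dc {α β : Type*} (A : Finset α) (B : Finset β) (r : α → β → Prop)
    [∀ a, DecidablePred (r a)] [∀ b, DecidablePred (fun a => r a b)] :
    ∑ a ∈ A, (B.filter (r a)).card = ∑ b ∈ B, (A.filter (r · b)).card := by
  simp_rw [Finset.card_filter]; exact Finset.sum_comm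

lemma wernicke_vface {V : Type*} [Fintype V] [DecidableEq V] (G : SimpleGraph V)
    [DecidableRel G.Adj] (t : Finset V) (ht3 : t.card = 3)
    (hcl : ∀ x ∈ t, ∀ y ∈ t, x ≠ y → G.Adj x y) (v : V) (hv : v ∈ t) :
    (G.edgeFinset.filter (fun e => v ∈ e ∧ ∀ x ∈ e, x ∈ t)).card = 2 := by
  have heq : G.edgeFinset.filter (fun e => v ∈ e ∧ ∀ x ∈ e, x ∈ t)
      = (t.erase v).image (fun w => s(v, w)) := by
    ext e
    induction e using Sym2.ind with
    | _ x y =>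
      simp only [Finset.mem_filter, Finset.mem_image, SimpleGraph.mem_edgeFinset,
        SimpleGraph.mem_edgeSet, Sym2.mem_iff, Finset.mem_erase]
      constructor
      · rintro ⟨hadj, hve, hsub⟩
        rcases hve with rfl | rfl
        · exact ⟨y, ⟨hadj.ne', hsub y (Or.inr rfl)⟩, rfl⟩
        · exact ⟨x, ⟨hadj.ne, hsub x (Or.inl rfl)⟩, Sym2.eq_swap⟩
      · rintro ⟨w, ⟨hwv, hwt⟩, hw⟩
        rcases Sym2.eq_iff.1 hw with ⟨rfl, rfl⟩ | ⟨rfl, rfl⟩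
        · exact ⟨hcl _ hv _ hwt (Ne.symm hwv), Or.inl rfl, by rintro z (rfl | rfl) <;> assumption⟩
        · exact ⟨hcl _ hwt _ hv hwv, Or.inr rfl, by rintro z (rfl | rfl) <;> assumption⟩
  rw [heq, Finset.card_image_of_injOn (fun a _ b _ h => Sym2.congr_right.1 h),
    Finset.card_erase_of_mem hv, ht3]

lemma wernicke_face3 {V : Type*} [Fintype V] [DecidableEq V] (G : SimpleGraph V)
    [DecidableRel G.Adj] (t : Finset V) (ht3 : t.card = 3)
    (hcl : ∀ x ∈ t, ∀ y ∈ t, x ≠ y → G.Adj x y) :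
    (G.edgeFinset.filter (fun e => ∀ x ∈ e, x ∈ t)).card = 3 := by
  obtain ⟨a, b, c, hab, hac, hbc, rfl⟩ := Finset.card_eq_three.1 ht3
  have heq : G.edgeFinset.filter (fun e => ∀ x ∈ e, x ∈ ({a, b, c} : Finset V))
      = {s(a,b), s(a,c), s(b,c)} := by
    ext e
    induction e using Sym2.ind with
    | _ x y =>
      simp only [Finset.mem_filter, SimpleGraph.mem_edgeFinset, SimpleGraph.mem_edgeSet,
        Sym2.mem_iff, Finset.mem_insert, Finset.mem_singleton]
      constructor
      · rintro ⟨hadj, hsub⟩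
        have hx := hsub x (Or.inl rfl)
        have hy := hsub y (Or.inr rfl)
        have hne := hadj.ne
        rcases hx with rfl | rfl | rfl <;> rcases hy with rfl | rfl | rfl <;>
          simp_all [Sym2.eq_iff]
      · have h1 : a ∈ ({a,b,c} : Finset V) := by simp
        have h2 : b ∈ ({a,b,c} : Finset V) := by simp
        have h3 : c ∈ ({a,b,c} : Finset V) := by simp
        rintro (he | he | he) <;> rcases Sym2.eq_iff.1 he with ⟨rfl, rfl⟩ | ⟨rfl, rfl⟩ <;>
          refine ⟨by solve_by_elim [Ne.symm, (hcl _ _ _ _ · )], ?_⟩ <;>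
          · rintro z (rfl | rfl) <;> simp
  rw [heq]
  rw [Finset.card_insert_of_notMem
      (by simp [Sym2.eq_iff, hab, hac, hbc, hab.symm, hac.symm, hbc.symm]),
    Finset.card_insert_of_notMem
      (by simp [Sym2.eq_iff, hab, hac, hbc, hab.symm, hac.symm, hbc.symm]),
    Finset.card_singleton]



/-- A combinatorial plane triangulation (maximal planar graph): a connected simple
graph together with a collection of triangular faces, each being a 3-clique, such
that every edge lies on exactly two faces, satisfying Euler's formula `n - m + f = 2`. -/
def IsPlaneTriangulation {V : Type*} [Fintype V] [DecidableEq V]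
    (G : SimpleGraph V) [DecidableRel G.Adj] : Prop :=
  G.Connected ∧ ∃ F : Finset (Finset V),
    (∀ t ∈ F, t.card = 3 ∧ ∀ x ∈ t, ∀ y ∈ t, x ≠ y → G.Adj x y) ∧
    (∀ e ∈ G.edgeFinset, ∃ t₁ ∈ F, ∃ t₂ ∈ F, t₁ ≠ t₂ ∧
      (∀ x ∈ e, x ∈ t₁) ∧ (∀ x ∈ e, x ∈ t₂) ∧
      ∀ t ∈ F, (∀ x ∈ e, x ∈ t) → t = t₁ ∨ t = t₂) ∧
    ((Fintype.card V : ℤ) - (G.edgeFinset.card : ℤ) + (F.card : ℤ) = 2)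


/-- Wernicke's theorem: every maximal planar graph of minimum degree 5 contains
an edge joining two degree-5 vertices (a 55-configuration) or an edge joining a
degree-5 vertex to a degree-6 vertex (a 56-configuration). -/
theorem wernicke {V : Type*} [Fintype V] [DecidableEq V]
    (G : SimpleGraph V) [DecidableRel G.Adj]
    (htri : IsPlaneTriangulation G) (hmin : G.minDegree = 5) :
    ∃ u v : V, G.Adj u v ∧ G.degree u = 5 ∧ (G.degree v = 5 ∨ G.degree v = 6) := by
  obtain ⟨hconn, F, hfaces, hedges, heuler⟩ := htri
  by_contra hcon
  push_neg at hcon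
  -- per edge: exactly two faces
  have hpair : ∀ e ∈ G.edgeFinset, (F.filter (fun t => ∀ x ∈ e, x ∈ t)).card = 2 := by
    intro e he
    obtain ⟨t₁, ht₁, t₂, ht₂, hne, hs₁, hs₂, huniq⟩ := hedges e he
    have heq : F.filter (fun t => ∀ x ∈ e, x ∈ t) = {t₁, t₂} := by
      ext t
      simp only [mem_filter, mem_insert, mem_singleton]
      constructor
      · rintro ⟨htF, hsub⟩; exact huniq t htF hsub
      · rintro (rfl | rfl) <;> exact ⟨by assumption, by assumption⟩
    rw [heq, Finset.card_insert_of_notMem (by simpa), Finset.card_singleton]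
  -- 3f = 2m
  have h32 : 3 * F.card = 2 * G.edgeFinset.card := by
    have hl : ∑ t ∈ F, (G.edgeFinset.filter (fun e => ∀ x ∈ e, x ∈ t)).card = 3 * F.card := by
      rw [Finset.sum_congr rfl (fun t ht => wernicke_face3 G t (hfaces t ht).1 (hfaces t ht).2),
        Finset.sum_const, smul_eq_mul, mul_comm]
    have hr : ∑ e ∈ G.edgeFinset, (F.filter (fun t => ∀ x ∈ e, x ∈ t)).card
        = 2 * G.edgeFinset.card := by
      rw [Finset.sum_congr rfl hpair, Finset.sum_const, smul_eq_mul, mul_comm]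
    rw [← hl, ← hr]
    exact wernicke_dc F G.edgeFinset (fun t e => ∀ x ∈ e, x ∈ t)
  -- each vertex is in exactly deg v faces
  have hvf : ∀ v : V, (F.filter (fun t => v ∈ t)).card = G.degree v := by
    intro v
    have key := wernicke_dc F G.edgeFinset (fun t e => v ∈ e ∧ ∀ x ∈ e, x ∈ t)
    have hl : ∑ t ∈ F, (G.edgeFinset.filter (fun e => v ∈ e ∧ ∀ x ∈ e, x ∈ t)).card
        = 2 * (F.filter (fun t => v ∈ t)).card := by
      have hstep : ∀ t ∈ F,
          (G.edgeFinset.filter (fun e => v ∈ e ∧ ∀ x ∈ e, x ∈ t)).card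
            = if v ∈ t then 2 else 0 := by
        intro t ht
        by_cases hvt : v ∈ t
        · rw [if_pos hvt]; exact wernicke_vface G t (hfaces t ht).1 (hfaces t ht).2 v hvt
        · rw [if_neg hvt, Finset.card_eq_zero, Finset.filter_eq_empty_iff]
          rintro e he ⟨hve, hsub⟩
          exact hvt (hsub v hve)
      rw [Finset.sum_congr rfl hstep, ← Finset.sum_filter, Finset.sum_const, smul_eq_mul, mul_comm]
    have hr : ∑ e ∈ G.edgeFinset, (F.filter (fun t => v ∈ e ∧ ∀ x ∈ e, x ∈ t)).card
        = 2 * G.degree v := by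
      have hstep : ∀ e ∈ G.edgeFinset,
          (F.filter (fun t => v ∈ e ∧ ∀ x ∈ e, x ∈ t)).card = if v ∈ e then 2 else 0 := by
        intro e he
        by_cases hve : v ∈ e
        · rw [if_pos hve]
          have hfc : F.filter (fun t => v ∈ e ∧ ∀ x ∈ e, x ∈ t)
              = F.filter (fun t => ∀ x ∈ e, x ∈ t) :=
            Finset.filter_congr (fun t _ => by simp [hve])
          rw [hfc]
          exact hpair e he
        · rw [if_neg hve, Finset.card_eq_zero, Finset.filter_eq_empty_iff]
          rintro t ht ⟨hve', _⟩
          exact hve hve'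
      rw [Finset.sum_congr rfl hstep, ← Finset.sum_filter, Finset.sum_const, smul_eq_mul, mul_comm]
      congr 1
      rw [← SimpleGraph.incidenceFinset_eq_filter, SimpleGraph.card_incidenceFinset_eq_degree]
    omega
  -- S and T
  set S := univ.filter (fun v => G.degree v = 5) with hS
  set T := univ.filter (fun v => 7 ≤ G.degree v) with hT
  have hsumX : ∀ X : Finset V, ∑ t ∈ F, (t ∩ X).card = ∑ v ∈ X, G.degree v := by
    intro X
    have key := wernicke_dc F X (fun t v => v ∈ t)
    simp_rw [Finset.filter_mem_eq_inter] at key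
    calc ∑ t ∈ F, (t ∩ X).card = ∑ t ∈ F, (X ∩ t).card := by
          simp_rw [Finset.inter_comm]
      _ = ∑ v ∈ X, (F.filter (fun t => v ∈ t)).card := key
      _ = ∑ v ∈ X, G.degree v := Finset.sum_congr rfl (fun v _ => hvf v)
  have hface_ineq : ∀ t ∈ F, 2 * (t ∩ S).card ≤ (t ∩ T).card := by
    intro t ht
    obtain ⟨ht3, hcl⟩ := hfaces t ht
    rcases Finset.eq_empty_or_nonempty (t ∩ S) with h | ⟨v, hv⟩
    · simp [h]
    · have hvt : v ∈ t := (Finset.mem_inter.1 hv).1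
      have hv5 : G.degree v = 5 := (Finset.mem_filter.1 (Finset.mem_inter.1 hv).2).2
      have hone : t ∩ S = {v} := by
        refine Finset.eq_singleton_iff_unique_mem.2 ⟨hv, ?_⟩
        intro w hw
        by_contra hne
        have hadj := hcl v hvt w (Finset.mem_inter.1 hw).1 (Ne.symm hne)
        exact (hcon v w hadj hv5).1 (Finset.mem_filter.1 (Finset.mem_inter.1 hw).2).2
      have hsub2 : t.erase v ⊆ t ∩ T := by
        intro w hw
        have hwt := Finset.mem_of_mem_erase hw
        have hwv : w ≠ v := Finset.ne_of_mem_erase hw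
        have hadj := hcl v hvt w hwt (Ne.symm hwv)
        obtain ⟨h5, h6⟩ := hcon v w hadj hv5
        have h5le : 5 ≤ G.degree w := hmin ▸ G.minDegree_le_degree w
        refine Finset.mem_inter.2 ⟨hwt, Finset.mem_filter.2 ⟨Finset.mem_univ w, ?_⟩⟩
        omega
      have h2le : 2 ≤ (t ∩ T).card := by
        calc 2 = (t.erase v).card := by rw [Finset.card_erase_of_mem hvt, ht3]
          _ ≤ _ := Finset.card_le_card hsub2
      rw [hone]
      simpa using h2le
  have hmain : 2 * ∑ v ∈ S, G.degree v ≤ ∑ v ∈ T, G.degree v := by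
    rw [← hsumX, ← hsumX, Finset.mul_sum]
    exact Finset.sum_le_sum hface_ineq
  have hSdeg : ∑ v ∈ S, G.degree v = 5 * S.card := by
    rw [Finset.sum_congr rfl (fun v hv => (Finset.mem_filter.1 hv).2),
      Finset.sum_const, smul_eq_mul, mul_comm]
  -- total charge
  have hsum_deg : (∑ v, (G.degree v : ℤ)) = 2 * G.edgeFinset.card := by
    exact_mod_cast G.sum_degrees_eq_twice_card_edges
  have h32' : (3 : ℤ) * F.card = 2 * G.edgeFinset.card := by exact_mod_cast h32
  have hcharge : ∑ v : V, ((G.degree v : ℤ) - 6) = -12 := by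
    rw [Finset.sum_sub_distrib, Finset.sum_const, Finset.card_univ, hsum_deg, nsmul_eq_mul]
    linarith
  -- partition the charge sum
  have hsplit1 := Finset.sum_filter_add_sum_filter_not Finset.univ
    (fun v => G.degree v = 5) (fun v => (G.degree v : ℤ) - 6)
  have hsplit2 := Finset.sum_filter_add_sum_filter_not
    (Finset.univ.filter (fun v => ¬ G.degree v = 5))
    (fun v => 7 ≤ G.degree v) (fun v => (G.degree v : ℤ) - 6)
  have hTeq : (Finset.univ.filter (fun v => ¬ G.degree v = 5)).filter
      (fun v => 7 ≤ G.degree v) = T := by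
    rw [hT]
    ext v
    simp only [Finset.mem_filter, Finset.mem_univ, true_and]
    constructor
    · rintro ⟨_, h⟩; exact h
    · intro h; exact ⟨by omega, h⟩
  have hmid : ∑ v ∈ (Finset.univ.filter (fun v => ¬ G.degree v = 5)).filter
      (fun v => ¬ 7 ≤ G.degree v), ((G.degree v : ℤ) - 6) = 0 := by
    refine Finset.sum_eq_zero ?_
    intro v hv
    simp only [Finset.mem_filter, Finset.mem_univ, true_and] at hv
    have h5le : 5 ≤ G.degree v := hmin ▸ G.minDegree_le_degree v
    have : G.degree v = 6 := by omega
    rw [this]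
    norm_num
  have hSsum : ∑ v ∈ S, ((G.degree v : ℤ) - 6) = -(S.card : ℤ) := by
    have h5 : ∑ v ∈ S, (G.degree v : ℤ) = 5 * S.card := by exact_mod_cast hSdeg
    rw [Finset.sum_sub_distrib, h5, Finset.sum_const, nsmul_eq_mul]
    ring
  have hT7 : ∑ v ∈ T, (G.degree v : ℤ) ≤ 7 * ∑ v ∈ T, ((G.degree v : ℤ) - 6) := by
    rw [Finset.mul_sum]
    refine Finset.sum_le_sum ?_
    intro v hv
    have h7 : 7 ≤ G.degree v := (Finset.mem_filter.1 hv).2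
    have : (7 : ℤ) ≤ G.degree v := by exact_mod_cast h7
    linarith
  -- assemble
  rw [hTeq, hmid, add_zero] at hsplit2
  rw [← hsplit2, hSsum] at hsplit1
  rw [hcharge] at hsplit1
  -- hsplit1 : -(S.card : ℤ) + ∑ v in T, ((deg v:ℤ)-6) = -12
  have hmain' : 2 * (5 * (S.card : ℤ)) ≤ ∑ v ∈ T, (G.degree v : ℤ) := by
    have := hmain
    rw [hSdeg] at this
    calc 2 * (5 * (S.card : ℤ)) = ((2 * (5 * S.card) : ℕ) : ℤ) := by push_cast; ring
      _ ≤ ((∑ v ∈ T, G.degree v : ℕ) : ℤ) := by exact_mod_cast this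
      _ = ∑ v ∈ T, (G.degree v : ℤ) := by push_cast; rfl
  have hSnn : (0 : ℤ) ≤ S.card := Int.natCast_nonneg _
  linarith
end

section
/- Let G be a plane triangulation, v a vertex of degree 5 with wheel neighborhood cycle C₅ = u v₃ v₄ v₁ v₅ u, and f a proper 4-coloring of G − v under which C₅ receives all four colors, say f(u)=1, f(v₃)=f(v₅)=2, f(v₄)=3, f(v₁)=4. If u and v₁ lie in different 14-components of f, then G is properly 4-colorable. -/
/-- Kempe's 5-wheel step: `G` is a plane triangulation, `v` a vertex of degree 5
with wheel cycle `C₅ = u v₃ v₄ v₁ v₅ u`, and `f` a proper 4-coloring of `G - v`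
under which `C₅` receives all four colors (`f u = 1`, `f v₃ = f v₅ = 2`,
`f v₄ = 3`, `f v₁ = 4`; colors `1,2,3,4` are `0,1,2,3 : Fin 4`).  If `u` and `v₁`
lie in different 14-components of `f` (no chain of color-`{1,4}` vertices of
`G - v` joins them), then `G` is properly 4-colorable. -/
theorem fiveWheel_kempe_colorable {V : Type*} [Fintype V] [DecidableEq V]
    (G : SimpleGraph V) [DecidableRel G.Adj]
    (htri : IsPlaneTriangulation G) (v u v₁ v₃ v₄ v₅ : V)
    (hdeg : G.degree v = 5)
    (hN : ∀ w, G.Adj v w ↔ (w = u ∨ w = v₃ ∨ w = v₄ ∨ w = v₁ ∨ w = v₅))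
    (hc1 : G.Adj u v₃) (hc2 : G.Adj v₃ v₄) (hc3 : G.Adj v₄ v₁)
    (hc4 : G.Adj v₁ v₅) (hc5 : G.Adj v₅ u)
    (f : V → Fin 4)
    (hf : ∀ a b, G.Adj a b → a ≠ v → b ≠ v → f a ≠ f b)
    (hfu : f u = 0) (hf3 : f v₃ = 1) (hf5 : f v₅ = 1) (hf4 : f v₄ = 2)
    (hf1 : f v₁ = 3)
    (hsep : ¬ Relation.ReflTransGen (fun a b => G.Adj a b ∧ a ≠ v ∧ b ≠ v ∧
      (f a = 0 ∨ f a = 3) ∧ (f b = 0 ∨ f b = 3)) u v₁) :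
    G.Colorable 4 := by
  classical
  set R : V → V → Prop := fun a b => G.Adj a b ∧ a ≠ v ∧ b ≠ v ∧
      (f a = 0 ∨ f a = 3) ∧ (f b = 0 ∨ f b = 3) with hR
  set S : V → Prop := fun x => Relation.ReflTransGen R u x with hS
  -- every vertex in the Kempe chain has color 0 or 3
  have hScol : ∀ x, S x → f x = 0 ∨ f x = 3 := by
    intro x hx
    induction hx with
    | refl => exact Or.inl hfu
    | tail _ h _ => exact h.2.2.2.2
  -- the swap of colors 0 and 3
  set sw : Fin 4 → Fin 4 := fun c => if c = 0 then 3 else if c = 3 then 0 else c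
    with hsw
  have hswinj : Function.Injective sw := by decide
  set g : V → Fin 4 := fun x => if x = v then 0 else if S x then sw (f x) else f x
    with hg
  have hgv : g v = 0 := by simp [hg]
  have hgS : ∀ x, x ≠ v → S x → g x = sw (f x) := by
    intro x hx hxS; simp [hg, hx, hxS]
  have hgNS : ∀ x, x ≠ v → ¬ S x → g x = f x := by
    intro x hx hxS; simp [hg, hx, hxS]
  have huv : u ≠ v := (G.ne_of_adj ((hN u).mpr (Or.inl rfl))).symm
  have h3v : v₃ ≠ v := (G.ne_of_adj ((hN v₃).mpr (by tauto))).symm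
  have h4v : v₄ ≠ v := (G.ne_of_adj ((hN v₄).mpr (by tauto))).symm
  have h1v : v₁ ≠ v := (G.ne_of_adj ((hN v₁).mpr (by tauto))).symm
  have h5v : v₅ ≠ v := (G.ne_of_adj ((hN v₅).mpr (by tauto))).symm
  have hnS3 : ¬ S v₃ := by
    intro h
    rcases hScol v₃ h with h0 | h0 <;> rw [hf3] at h0 <;> exact absurd h0 (by decide)
  have hnS4 : ¬ S v₄ := by
    intro h
    rcases hScol v₄ h with h0 | h0 <;> rw [hf4] at h0 <;> exact absurd h0 (by decide)
  have hnS5 : ¬ S v₅ := by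
    intro h
    rcases hScol v₅ h with h0 | h0 <;> rw [hf5] at h0 <;> exact absurd h0 (by decide)
  have hnS1 : ¬ S v₁ := hsep
  -- neighbors of v do not get color 0 under g
  have hkey : ∀ w, G.Adj v w → g w ≠ 0 := by
    intro w hw
    rcases (hN w).mp hw with rfl | rfl | rfl | rfl | rfl
    · rw [hgS _ huv Relation.ReflTransGen.refl, hfu]; decide
    · rw [hgNS _ h3v hnS3, hf3]; decide
    · rw [hgNS _ h4v hnS4, hf4]; decide
    · rw [hgNS _ h1v hnS1, hf1]; decide
    · rw [hgNS _ h5v hnS5, hf5]; decide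
  -- the mixed case: one endpoint in the chain, the other not
  have hmix : ∀ a b, G.Adj a b → a ≠ v → b ≠ v → S a → ¬ S b →
      sw (f a) ≠ f b := by
    intro a b hab hav hbv haS hbS heq
    have hfa := hScol a haS
    have hfb : f b = 0 ∨ f b = 3 := by
      rcases hfa with h | h <;> rw [h] at heq <;> simp [hsw] at heq <;>
        [exact Or.inr heq.symm; exact Or.inl heq.symm]
    exact hbS (haS.tail ⟨hab, hav, hbv, hfa, hfb⟩)
  have hproper : ∀ a b, G.Adj a b → g a ≠ g b := by
    intro a b hab
    by_cases hav : a = v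
    · subst hav
      rw [hgv]
      exact (hkey b hab).symm
    by_cases hbv : b = v
    · subst hbv
      rw [hgv]
      exact hkey a hab.symm
    by_cases haS : S a <;> by_cases hbS : S b
    · rw [hgS a hav haS, hgS b hbv hbS]
      exact fun h => hf a b hab hav hbv (hswinj h)
    · rw [hgS a hav haS, hgNS b hbv hbS]
      exact hmix a b hab hav hbv haS hbS
    · rw [hgNS a hav haS, hgS b hbv hbS]
      exact fun h => hmix b a hab.symm hbv hav hbS haS h.symm
    · rw [hgNS a hav haS, hgNS b hbv hbS]
      exact hf a b hab hav hbv
  exact ⟨SimpleGraph.Coloring.mk g fun hab => hproper _ _ hab⟩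
end
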